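/- The set Orn(D) of ornamentations of a directed graph D, ordered by componentwise inclusion (O₁ ≤ O₂ iff O₁(v) ⊆ O₂(v) for all v), forms a lattice. The meet of O₁ and O₂ sends v to the inclusion-maximal ornament at v contained in O₁(v) ∩ O₂(v), and the join sends v to the inclusion-minimal subset U of V containing v such that u ∈ U implies O₁(u) ∪ O₂(u) ⊆ U. -/

import Mathlib

/-- A directed path from `u` to `v` in the digraph `D` using only vertices of `U`. -/
def pathIn {V : Type*} (D : V → V → Prop) (U : Set V) (u v : V) : Prop :=
  Relation.ReflTransGen (fun a b => D a b ∧ a ∈ U ∧ b ∈ U) u v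

/-- An ornament of `D` at `v`. -/
def IsOrnament {V : Type*} (D : V → V → Prop) (v : V) (U : Set V) : Prop :=
  v ∈ U ∧ ∀ u ∈ U, pathIn D U u v

/-- An ornamentation of `D`: each vertex gets an ornament, with the nesting condition. -/
def IsOrnamentation {V : Type*} (D : V → V → Prop) (O : V → Set V) : Prop :=
  (∀ v, IsOrnament D v (O v)) ∧ ∀ u v, u ∈ O v → O u ⊆ O v

/-- The inclusion maximal ornament of `D` at `v` contained in `X`
(the union of all such ornaments). -/
def maxOrnIn {V : Type*} (D : V → V → Prop) (v : V) (X : Set V) : Set V :=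
  ⋃₀ {U | IsOrnament D v U ∧ U ⊆ X}

/-- The join of two ornamentations: `v` is sent to the inclusion minimal set `U`
containing `v` such that `u ∈ U` implies `O₁ u ∪ O₂ u ⊆ U`. -/
def ornJoin {V : Type*} (D : V → V → Prop) (O₁ O₂ : V → Set V) (v : V) : Set V :=
  ⋂₀ {U | v ∈ U ∧ ∀ u ∈ U, O₁ u ∪ O₂ u ⊆ U}

section Aux

variable {V : Type*} {D : V → V → Prop}

lemma pathIn_mono {U W : Set V} (hUW : U ⊆ W) {u v : V} (h : pathIn D U u v) :
    pathIn D W u v :=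
  Relation.ReflTransGen.mono (r := fun a b => D a b ∧ a ∈ U ∧ b ∈ U)
    (p := fun a b => D a b ∧ a ∈ W ∧ b ∈ W)
    (fun _ _ hab => ⟨hab.1, hUW hab.2.1, hUW hab.2.2⟩) u v h

lemma pathIn_trans {U : Set V} {u v w : V} (h : pathIn D U u v) (h' : pathIn D U v w) :
    pathIn D U u w :=
  Relation.ReflTransGen.trans h h'

lemma maxOrnIn_isOrnament {v : V} {X : Set V} (hv : v ∈ X) :
    IsOrnament D v (maxOrnIn D v X) := by
  constructor
  · have horn : IsOrnament D v {v} :=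
      ⟨rfl, fun u hu => by cases hu; exact Relation.ReflTransGen.refl⟩
    have hmem : ({v} : Set V) ∈ {U | IsOrnament D v U ∧ U ⊆ X} := ⟨horn, by simpa using hv⟩
    exact Set.subset_sUnion_of_mem hmem rfl
  · rintro u ⟨U, ⟨hU, hUX⟩, huU⟩
    have hmem : U ∈ {W | IsOrnament D v W ∧ W ⊆ X} := ⟨hU, hUX⟩
    exact pathIn_mono (Set.subset_sUnion_of_mem hmem) (hU.2 u huU)

lemma maxOrnIn_subset {v : V} {X : Set V} : maxOrnIn D v X ⊆ X :=
  Set.sUnion_subset fun _ hU => hU.2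

lemma mem_ornJoin_self (O₁ O₂ : V → Set V) (v : V) : v ∈ ornJoin D O₁ O₂ v :=
  Set.mem_sInter.2 fun _ hU => hU.1

lemma ornJoin_closed (O₁ O₂ : V → Set V) {v u : V} (hu : u ∈ ornJoin D O₁ O₂ v) :
    O₁ u ∪ O₂ u ⊆ ornJoin D O₁ O₂ v :=
  Set.subset_sInter fun U hU => hU.2 u (Set.mem_sInter.1 hu U hU)

lemma ornJoin_subset (O₁ O₂ : V → Set V) {v : V} {U : Set V}
    (hU : v ∈ U ∧ ∀ u ∈ U, O₁ u ∪ O₂ u ⊆ U) : ornJoin D O₁ O₂ v ⊆ U :=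
  Set.sInter_subset_of_mem hU

end Aux

/-- Ornamentations of `D`, ordered componentwise by inclusion, form a lattice, with the
described meet (pointwise maximal ornament inside the intersection) and join. -/
theorem ornamentation_lattice {V : Type*} (D : V → V → Prop) (O₁ O₂ : V → Set V)
    (h₁ : IsOrnamentation D O₁) (h₂ : IsOrnamentation D O₂) :
    IsOrnamentation D (fun v => maxOrnIn D v (O₁ v ∩ O₂ v)) ∧
    (∀ v, maxOrnIn D v (O₁ v ∩ O₂ v) ⊆ O₁ v) ∧
    (∀ v, maxOrnIn D v (O₁ v ∩ O₂ v) ⊆ O₂ v) ∧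
    (∀ O : V → Set V, IsOrnamentation D O → (∀ v, O v ⊆ O₁ v) → (∀ v, O v ⊆ O₂ v) →
      ∀ v, O v ⊆ maxOrnIn D v (O₁ v ∩ O₂ v)) ∧
    IsOrnamentation D (ornJoin D O₁ O₂) ∧
    (∀ v, O₁ v ⊆ ornJoin D O₁ O₂ v) ∧
    (∀ v, O₂ v ⊆ ornJoin D O₁ O₂ v) ∧
    (∀ O : V → Set V, IsOrnamentation D O → (∀ v, O₁ v ⊆ O v) → (∀ v, O₂ v ⊆ O v) →
      ∀ v, ornJoin D O₁ O₂ v ⊆ O v) := by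
  -- abbreviations
  set M : V → Set V := fun v => maxOrnIn D v (O₁ v ∩ O₂ v) with hM
  have hvX : ∀ v : V, v ∈ O₁ v ∩ O₂ v := fun v => ⟨(h₁.1 v).1, (h₂.1 v).1⟩
  have hM1 : ∀ v, M v ⊆ O₁ v := fun v => (maxOrnIn_subset).trans Set.inter_subset_left
  have hM2 : ∀ v, M v ⊆ O₂ v := fun v => (maxOrnIn_subset).trans Set.inter_subset_right
  have hMorn : ∀ v, IsOrnament D v (M v) := fun v => maxOrnIn_isOrnament (hvX v)
  -- nesting for M
  have hMnest : ∀ u v, u ∈ M v → M u ⊆ M v := by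
    intro u v huv
    have hsub : M u ∪ M v ⊆ O₁ v ∩ O₂ v := by
      apply Set.union_subset
      · refine (maxOrnIn_subset).trans ?_
        exact Set.inter_subset_inter (h₁.2 u v (hM1 v huv)) (h₂.2 u v (hM2 v huv))
      · exact maxOrnIn_subset
    have horn : IsOrnament D v (M u ∪ M v) := by
      refine ⟨Or.inr (hMorn v).1, ?_⟩
      rintro w (hw | hw)
      · have p1 : pathIn D (M u ∪ M v) w u :=
          pathIn_mono Set.subset_union_left ((hMorn u).2 w hw)
        have p2 : pathIn D (M u ∪ M v) u v :=
          pathIn_mono Set.subset_union_right ((hMorn v).2 u huv)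
        exact pathIn_trans p1 p2
      · exact pathIn_mono Set.subset_union_right ((hMorn v).2 w hw)
    intro x hx
    have hmem : M u ∪ M v ∈ {W | IsOrnament D v W ∧ W ⊆ O₁ v ∩ O₂ v} := ⟨horn, hsub⟩
    exact Set.subset_sUnion_of_mem hmem (Or.inl hx)
  -- join facts
  set J : V → Set V := ornJoin D O₁ O₂ with hJ
  have hJmem : ∀ v, v ∈ J v := fun v => mem_ornJoin_self O₁ O₂ v
  have hJclosed : ∀ v, ∀ u ∈ J v, O₁ u ∪ O₂ u ⊆ J v := fun v u hu => ornJoin_closed O₁ O₂ hu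
  have hJorn : ∀ v, IsOrnament D v (J v) := by
    intro v
    refine ⟨hJmem v, ?_⟩
    have key : J v ⊆ {u | u ∈ J v ∧ pathIn D (J v) u v} := by
      apply ornJoin_subset O₁ O₂
      refine ⟨⟨hJmem v, Relation.ReflTransGen.refl⟩, ?_⟩
      rintro u ⟨huJ, hup⟩ w hw
      have hwJ : w ∈ J v := hJclosed v u huJ hw
      refine ⟨hwJ, ?_⟩
      rcases hw with hw | hw
      · have hO1J : O₁ u ⊆ J v := Set.union_subset_iff.1 (hJclosed v u huJ) |>.1
        exact pathIn_trans (pathIn_mono hO1J ((h₁.1 u).2 w hw)) hup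
      · have hO2J : O₂ u ⊆ J v := Set.union_subset_iff.1 (hJclosed v u huJ) |>.2
        exact pathIn_trans (pathIn_mono hO2J ((h₂.1 u).2 w hw)) hup
    exact fun u hu => (key hu).2
  have hJnest : ∀ u v, u ∈ J v → J u ⊆ J v := by
    intro u v huv
    exact ornJoin_subset O₁ O₂ ⟨huv, fun w hw => hJclosed v w hw⟩
  refine ⟨⟨hMorn, hMnest⟩, hM1, hM2, ?_, ⟨hJorn, hJnest⟩, ?_, ?_, ?_⟩
  · intro O hO hO1 hO2 v
    have hmem : O v ∈ {U | IsOrnament D v U ∧ U ⊆ O₁ v ∩ O₂ v} :=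
      ⟨hO.1 v, Set.subset_inter (hO1 v) (hO2 v)⟩
    exact Set.subset_sUnion_of_mem hmem
  · intro v
    exact fun x hx => Set.mem_sInter.2 fun U hU => hU.2 v hU.1 (Or.inl hx)
  · intro v
    exact fun x hx => Set.mem_sInter.2 fun U hU => hU.2 v hU.1 (Or.inr hx)
  · intro O hO hO1 hO2 v
    exact ornJoin_subset O₁ O₂ ⟨(hO.1 v).1,
      fun u hu => Set.union_subset ((hO1 u).trans (hO.2 u v hu)) ((hO2 u).trans (hO.2 u v hu))⟩
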